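/- The induced operation ⋄ on the cocenter C(A) of a symmetric Frobenius algebra A is commutative: ⟨a ⋄ b⟩ = ⟨b ⋄ a⟩ for all a, b ∈ A, where a ⋄ b = ∑_{c∈B} a c b c^∨. -/

import Mathlib

/-- The induced operation `⋄` on the cocenter of a symmetric Frobenius algebra is commutative:
`⟨a ⋄ b⟩ = ⟨b ⋄ a⟩`. -/
theorem stmt9 {k A : Type*} [Field k] [Ring A] [Algebra k A]
    {ι : Type*} [Fintype ι] [DecidableEq ι]
    (B : Module.Basis ι k A)
    (tr : A →ₗ[k] k)
    (hsym : ∀ a b : A, tr (a * b) = tr (b * a))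
    (hnd : ∀ a : A, (∀ b : A, tr (a * b) = 0) → a = 0)
    (d : ι → A)
    (hd : ∀ i j, tr (d i * B j) = if i = j then 1 else 0)
    (diam : A → A → A)
    (hdiam : ∀ a b, diam a b = ∑ i, a * B i * b * d i)
    (J : Submodule k A)
    (hJ : J = Submodule.span k {x : A | ∃ y z : A, x = y * z - z * y})
    (a b : A) :
    (Submodule.Quotient.mk (diam a b) : A ⧸ J)
      = Submodule.Quotient.mk (diam b a) := by
  -- commutators lie in J
  have comm_mem : ∀ y z : A, y * z - z * y ∈ J := by
    intro y z
    rw [hJ]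
    exact Submodule.subset_span ⟨y, z, rfl⟩
  -- expand B j in terms of the dual basis d
  have hB : ∀ j, B j = ∑ m, tr (B j * B m) • d m := by
    intro j
    set y := B j - ∑ m, tr (B j * B m) • d m with hy
    have h0 : ∀ c : A, tr (y * c) = 0 := by
      have hbasis : ∀ i, tr (y * B i) = 0 := by
        intro i
        have : y * B i = B j * B i - ∑ m, tr (B j * B m) • (d m * B i) := by
          rw [hy, sub_mul, Finset.sum_mul]
          congr 1
          exact Finset.sum_congr rfl fun m _ => smul_mul_assoc _ _ _
        rw [this, map_sub, map_sum]
        have : ∑ m, tr (tr (B j * B m) • (d m * B i)) = tr (B j * B i) := by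
          have : ∀ m, tr (tr (B j * B m) • (d m * B i))
              = tr (B j * B m) * (if m = i then 1 else 0) := by
            intro m; rw [map_smul, hd]; rfl
          rw [Finset.sum_congr rfl fun m _ => this m]
          simp [Finset.sum_ite_eq']
        rw [this, sub_self]
      intro c
      let f : A →ₗ[k] k := tr ∘ₗ LinearMap.mulLeft k y
      have hf : f = 0 := by
        apply Module.Basis.ext B
        intro i
        simpa [f, LinearMap.mulLeft_apply] using hbasis i
      have := congrArg (fun g : A →ₗ[k] k => g c) hf
      simpa [f, LinearMap.mulLeft_apply] using this
    have h := hnd y h0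
    rw [hy] at h
    exact sub_eq_zero.mp h
  -- key: symmetry of the Casimir element
  have key : ∀ x : A, ∑ i, B i * x * d i = ∑ i, d i * x * B i := by
    intro x
    have lhs : ∑ i, B i * x * d i
        = ∑ i, ∑ m, tr (B i * B m) • (d m * x * d i) := by
      refine Finset.sum_congr rfl fun i _ => ?_
      conv_lhs => rw [hB i]
      rw [Finset.sum_mul, Finset.sum_mul]
      exact Finset.sum_congr rfl fun m _ => by
        rw [smul_mul_assoc, smul_mul_assoc]
    have rhs : ∑ i, d i * x * B i
        = ∑ i, ∑ m, tr (B i * B m) • (d i * x * d m) := by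
      refine Finset.sum_congr rfl fun i _ => ?_
      conv_lhs => rw [hB i]
      rw [Finset.mul_sum]
      exact Finset.sum_congr rfl fun m _ => by rw [mul_smul_comm]
    rw [lhs, rhs, Finset.sum_comm]
    refine Finset.sum_congr rfl fun m _ => Finset.sum_congr rfl fun i _ => ?_
    rw [hsym (B m) (B i)]
  -- now the main argument
  rw [Submodule.Quotient.eq]
  have h1 : diam a b - (∑ i, d i * (a * B i * b)) ∈ J := by
    rw [hdiam, ← Finset.sum_sub_distrib]
    refine Submodule.sum_mem _ fun i _ => ?_
    have : a * B i * b * d i - d i * (a * B i * b)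
        = (a * B i * b) * d i - d i * (a * B i * b) := by noncomm_ring
    rw [this]
    exact comm_mem _ _
  have h2 : (∑ i, (B i * a * d i) * b) - diam b a ∈ J := by
    rw [hdiam, ← Finset.sum_sub_distrib]
    refine Submodule.sum_mem _ fun i _ => ?_
    have : (B i * a * d i) * b - b * B i * a * d i
        = (B i * a * d i) * b - b * (B i * a * d i) := by noncomm_ring
    rw [this]
    exact comm_mem _ _
  have hmid : (∑ i, d i * (a * B i * b)) = ∑ i, (B i * a * d i) * b := by
    have : (∑ i, d i * (a * B i * b)) = (∑ i, d i * a * B i) * b := by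
      rw [Finset.sum_mul]
      exact Finset.sum_congr rfl fun i _ => by noncomm_ring
    rw [this, ← key a, Finset.sum_mul]
  have := Submodule.add_mem J h1 h2
  rw [hmid] at this
  convert this using 1
  abel
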